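/- Let A be a real tensor of size n×n×n₃ that is invertible with inverse A⁻¹ (i.e. A*A⁻¹ = A⁻¹*A = 𝓘), and let E be a tensor of size n×n×n₃ with ‖A⁻¹‖₂·‖E‖₂ < 1. Then the entrywise sum A+E is invertible, i.e. there exists a tensor C of size n×n×n₃ with (A+E)*C = C*(A+E) = 𝓘. -/

import Mathlib

open scoped Matrix.Norms.L2Operator

noncomputable section

/-- The t-product of third-order tensors. -/
def tProd {n₁ n₂ n₃ n₄ : ℕ} [NeZero n₃] (A : Fin n₁ → Fin n₂ → ZMod n₃ → ℝ)
    (B : Fin n₂ → Fin n₄ → ZMod n₃ → ℝ) : Fin n₁ → Fin n₄ → ZMod n₃ → ℝ :=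
  fun i j k => ∑ l : Fin n₂, ∑ m : ZMod n₃, A i l (k - m) * B l j m

/-- The Frobenius norm of a third-order tensor. -/
def frobNorm {n₁ n₂ n₃ : ℕ} [NeZero n₃] (A : Fin n₁ → Fin n₂ → ZMod n₃ → ℝ) : ℝ :=
  Real.sqrt (∑ i : Fin n₁, ∑ j : Fin n₂, ∑ k : ZMod n₃, (A i j k) ^ 2)

/-- The block circulant matrix of a third-order tensor. -/
def bcirc {n₁ n₂ n₃ : ℕ} (A : Fin n₁ → Fin n₂ → ZMod n₃ → ℝ) :
    Matrix (Fin n₁ × ZMod n₃) (Fin n₂ × ZMod n₃) ℝ :=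
  fun p q => A p.1 q.1 (p.2 - q.2)

/-- The spectral norm of a third-order tensor: the L2 operator norm of its
block circulant matrix. -/
def specNorm {n₁ n₂ n₃ : ℕ} [NeZero n₃] (A : Fin n₁ → Fin n₂ → ZMod n₃ → ℝ) : ℝ :=
  ‖bcirc A‖

/-- The identity tensor. -/
def tId (n n₃ : ℕ) : Fin n → Fin n → ZMod n₃ → ℝ :=
  fun i j k => if i = j ∧ k = 0 then 1 else 0

/-- The tensor transpose. -/
def tTrans {n₁ n₂ n₃ : ℕ} (A : Fin n₁ → Fin n₂ → ZMod n₃ → ℝ) :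
    Fin n₂ → Fin n₁ → ZMod n₃ → ℝ :=
  fun i j k => A j i (-k)

/-- `X` is a Moore-Penrose inverse of `A`. -/
def IsMPInv {n₁ n₂ n₃ : ℕ} [NeZero n₃] (A : Fin n₁ → Fin n₂ → ZMod n₃ → ℝ)
    (X : Fin n₂ → Fin n₁ → ZMod n₃ → ℝ) : Prop :=
  tProd (tProd A X) A = A ∧ tProd (tProd X A) X = X ∧
    tTrans (tProd A X) = tProd A X ∧ tTrans (tProd X A) = tProd X A

/-- The `i`-th DFT block of a third-order tensor. -/
def dftBlock {n₁ n₂ n₃ : ℕ} [NeZero n₃] (A : Fin n₁ → Fin n₂ → ZMod n₃ → ℝ) (i : ZMod n₃) :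
    Matrix (Fin n₁) (Fin n₂) ℂ :=
  fun p q => ∑ k : ZMod n₃,
    Complex.exp (-2 * Real.pi * Complex.I * (i.val : ℂ) * (k.val : ℂ) / (n₃ : ℂ)) * (A p q k : ℂ)

end


noncomputable section

lemma bcirc_tProd {n₁ n₂ n₄ n₃ : ℕ} [NeZero n₃] (A : Fin n₁ → Fin n₂ → ZMod n₃ → ℝ)
    (B : Fin n₂ → Fin n₄ → ZMod n₃ → ℝ) :
    bcirc (tProd A B) = bcirc A * bcirc B := by
  ext ⟨i, k⟩ ⟨j, m⟩
  simp only [bcirc, tProd, Matrix.mul_apply, Fintype.sum_prod_type]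
  refine Finset.sum_congr rfl fun l _ => ?_
  refine Fintype.sum_equiv (Equiv.addRight m) _ _ fun q => ?_
  simp only [Equiv.coe_addRight, add_sub_cancel_right]
  rw [show k - m - q = k - (q + m) by ring]

lemma bcirc_tId' (n n₃ : ℕ) [NeZero n₃] : bcirc (tId n n₃) = 1 := by
  ext ⟨i, k⟩ ⟨j, m⟩
  simp only [bcirc, tId, Matrix.one_apply, Prod.mk.injEq, sub_eq_zero]

lemma bcirc_injective {n₁ n₂ n₃ : ℕ} [NeZero n₃] :
    Function.Injective (bcirc : (Fin n₁ → Fin n₂ → ZMod n₃ → ℝ) → _) := by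
  intro A B h
  funext i j k
  have := congrFun (congrFun h (i, k)) (j, 0)
  simpa [bcirc] using this

/-- Shift tensor. -/
def tShift {n n₃ : ℕ} (s : ZMod n₃) : Fin n → Fin n → ZMod n₃ → ℝ :=
  fun i j k => if i = j ∧ k = s then 1 else 0

lemma tProd_tShift {n n₃ : ℕ} [NeZero n₃] (A : Fin n → Fin n → ZMod n₃ → ℝ) (s : ZMod n₃) :
    tProd A ((tShift s : Fin n → Fin n → ZMod n₃ → ℝ)) = fun i j k => A i j (k - s) := by
  funext i j k
  simp only [tProd, tShift, mul_ite, mul_one, mul_zero]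
  rw [Finset.sum_eq_single j]
  · simp
  · intro l _ hl; simp [hl]
  · simp

lemma tShift_tProd {n n₃ : ℕ} [NeZero n₃] (A : Fin n → Fin n → ZMod n₃ → ℝ) (s : ZMod n₃) :
    tProd ((tShift s : Fin n → Fin n → ZMod n₃ → ℝ)) A = fun i j k => A i j (k - s) := by
  funext i j k
  simp only [tProd, tShift, ite_mul, one_mul, zero_mul]
  rw [Finset.sum_eq_single i]
  · rw [Finset.sum_eq_single (k - s)] <;> simp +contextual [sub_eq_iff_eq_add']
    intro m h1 h2
    exact absurd (by rw [h2]; ring) h1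
  · intro l _ hl; simp [Ne.symm hl]
  · simp

end


theorem perturbed_tensor_invertible (n n₃ : ℕ) [NeZero n₃] (hn : 0 < n)
    (A Ainv E : Fin n → Fin n → ZMod n₃ → ℝ)
    (hA₁ : tProd A Ainv = tId n n₃) (hA₂ : tProd Ainv A = tId n n₃)
    (hE : specNorm Ainv * specNorm E < 1) :
    ∃ C : Fin n → Fin n → ZMod n₃ → ℝ,
      tProd (A + E) C = tId n n₃ ∧ tProd C (A + E) = tId n n₃ := by
  classical
  have hbA : bcirc A * bcirc Ainv = 1 := by rw [← bcirc_tProd, hA₁, bcirc_tId']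
  have hbA' : bcirc Ainv * bcirc A = 1 := by rw [← bcirc_tProd, hA₂, bcirc_tId']
  set X := bcirc Ainv * bcirc E with hX
  have hXnorm : ‖-X‖ < 1 := by
    rw [norm_neg]
    exact lt_of_le_of_lt (norm_mul_le _ _) hE
  let u2 : (Matrix (Fin n × ZMod n₃) (Fin n × ZMod n₃) ℝ)ˣ := Units.oneSub (-X) hXnorm
  let uA : (Matrix (Fin n × ZMod n₃) (Fin n × ZMod n₃) ℝ)ˣ := ⟨bcirc A, bcirc Ainv, hbA, hbA'⟩
  let u := uA * u2
  have hu : (u : Matrix (Fin n × ZMod n₃) (Fin n × ZMod n₃) ℝ) = bcirc (A + E) := by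
    show bcirc A * (1 - -X) = _
    have hAE : bcirc (A + E) = bcirc A + bcirc E := rfl
    rw [hAE, sub_neg_eq_add, mul_add, mul_one, hX, ← mul_assoc, hbA, one_mul]
  have hcomm : ∀ s : ZMod n₃,
      bcirc ((tShift s : Fin n → Fin n → ZMod n₃ → ℝ)) * (↑u⁻¹ : Matrix (Fin n × ZMod n₃) (Fin n × ZMod n₃) ℝ)
        = (↑u⁻¹ : Matrix (Fin n × ZMod n₃) (Fin n × ZMod n₃) ℝ) * bcirc ((tShift s : Fin n → Fin n → ZMod n₃ → ℝ)) := by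
    intro s
    have h1 : Commute (u : Matrix (Fin n × ZMod n₃) (Fin n × ZMod n₃) ℝ) (bcirc ((tShift s : Fin n → Fin n → ZMod n₃ → ℝ))) := by
      show _ * _ = _ * _
      rw [hu, ← bcirc_tProd, ← bcirc_tProd, tProd_tShift, tShift_tProd]
    exact (h1.units_inv_left).eq.symm
  set M := (↑u⁻¹ : Matrix (Fin n × ZMod n₃) (Fin n × ZMod n₃) ℝ) with hM
  refine ⟨fun i j k => M (i, k) (j, 0), ?_, ?_⟩ <;>
  · apply bcirc_injective
    have hC : bcirc (fun i j k => M (i, k) (j, 0)) = M := by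
      ext ⟨i, k⟩ ⟨j, m⟩
      show M (i, k - m) (j, 0) = M (i, k) (j, m)
      have e1 : ((bcirc ((tShift m : Fin n → Fin n → ZMod n₃ → ℝ))) * M) (i, k) (j, 0) = M (i, k - m) (j, 0) := by
        simp only [Matrix.mul_apply, bcirc, tShift, Fintype.sum_prod_type, ite_mul, one_mul,
          zero_mul]
        rw [Finset.sum_eq_single i]
        · rw [Finset.sum_eq_single (k - m)] <;> simp +contextual [sub_eq_iff_eq_add']
          intro p h1 h2
          exact absurd (by rw [h2]; ring) h1
        · intro l _ hl; simp [Ne.symm hl]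
        · simp
      have e2 : (M * bcirc ((tShift m : Fin n → Fin n → ZMod n₃ → ℝ))) (i, k) (j, 0) = M (i, k) (j, m) := by
        simp only [Matrix.mul_apply, bcirc, tShift, Fintype.sum_prod_type, mul_ite, mul_one,
          mul_zero, sub_zero]
        rw [Finset.sum_eq_single j]
        · simp
        · intro l _ hl; simp [hl]
        · simp
      rw [← e1, hcomm m, e2]
    rw [bcirc_tProd, hC, bcirc_tId']
    first
    | rw [hM, ← hu, u.mul_inv]
    | rw [hM, ← hu, u.inv_mul]
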